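/- Let A be an 8×8 ℕ-matrix such that A·𝟙 = 2·𝟙 and 𝟙ᵀ·A = 2·𝟙ᵀ (the all-ones vector is a right and a left eigenvector for eigenvalue 2) and whose characteristic polynomial is x⁷(x − 2). Then A⁷ = 16·J, where J is the 8×8 all-ones matrix, i.e., A⁷ = (2⁴·𝟙)(𝟙ᵀ), and the pair (2⁴·𝟙, 𝟙ᵀ) is a unital shift equivalence of lag 7 from A to the 1×1 matrix (2). In particular, A (for example the adjacency matrix of Ashley's graph) is unitally shift equivalent to (2). -/

import Mathlib

set_option maxRecDepth 100000


open Matrix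

/-- `(R,S)` is a shift equivalence of lag `l` from the `n × n` ℕ-matrix `A` to the
`m × m` ℕ-matrix `B`. -/
def IsShiftEquivalence {n m : ℕ} (A : Matrix (Fin n) (Fin n) ℕ) (B : Matrix (Fin m) (Fin m) ℕ)
    (R : Matrix (Fin n) (Fin m) ℕ) (S : Matrix (Fin m) (Fin n) ℕ) (l : ℕ) : Prop :=
  1 ≤ l ∧ A ^ l = R * S ∧ B ^ l = S * R ∧ A * R = R * B ∧ B * S = S * A

/-- `(R,S)` is a unital shift equivalence of lag `l` from `A` to `B`:
a shift equivalence such that `(Bᵀ)^p Rᵀ 𝟙 = (Bᵀ)^(p+q) 𝟙` for some `p q : ℕ`. -/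
def IsUnitalShiftEquivalence {n m : ℕ} (A : Matrix (Fin n) (Fin n) ℕ)
    (B : Matrix (Fin m) (Fin m) ℕ)
    (R : Matrix (Fin n) (Fin m) ℕ) (S : Matrix (Fin m) (Fin n) ℕ) (l : ℕ) : Prop :=
  IsShiftEquivalence A B R S l ∧
    ∃ p q : ℕ, (Bᵀ ^ p) *ᵥ (Rᵀ *ᵥ fun _ => 1) = (Bᵀ ^ (p + q)) *ᵥ (fun _ => 1)

/-- `A` and `B` are unitally shift equivalent. -/
def UnitallyShiftEquivalent {n m : ℕ} (A : Matrix (Fin n) (Fin n) ℕ)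
    (B : Matrix (Fin m) (Fin m) ℕ) : Prop :=
  ∃ (l : ℕ) (R : Matrix (Fin n) (Fin m) ℕ) (S : Matrix (Fin m) (Fin n) ℕ),
    IsUnitalShiftEquivalence A B R S l

/-- `A` and `B` are shift equivalent. -/
def ShiftEquivalent {n m : ℕ} (A : Matrix (Fin n) (Fin n) ℕ)
    (B : Matrix (Fin m) (Fin m) ℕ) : Prop :=
  ∃ (l : ℕ) (R : Matrix (Fin n) (Fin m) ℕ) (S : Matrix (Fin m) (Fin n) ℕ),
    IsShiftEquivalence A B R S l


private lemma one_by_one_pow (a n : ℕ) : (!![a] : Matrix (Fin 1) (Fin 1) ℕ) ^ n = !![a ^ n] := by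
  induction n with
  | zero => ext i j; fin_cases i; fin_cases j; simp [Matrix.one_apply]
  | succ n ih =>
    rw [pow_succ, ih]
    ext i j; fin_cases i; fin_cases j
    simp [Matrix.mul_apply, Fin.sum_univ_one, pow_succ]

section Aux
open Polynomial

lemma charpoly_sub_two {B : Matrix (Fin 8) (Fin 8) ℚ}
    (hc : B.charpoly = X ^ 7 * (X - C 2)) :
    (B - (2:ℚ) • 1).charpoly = (X + C 2) ^ 7 * X := by
  let φ : ℚ[X] →+* ℚ[X] := (aeval (X + C 2 : ℚ[X])).toRingHom
  have hmap : φ.mapMatrix (charmatrix B) = charmatrix (B - (2:ℚ) • 1) := by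
    ext i j
    rw [RingHom.mapMatrix_apply, Matrix.map_apply]
    by_cases h : i = j
    · subst h
      simp [charmatrix_apply_eq, φ, Matrix.sub_apply, Matrix.smul_apply, Matrix.one_apply]
      ring
    · simp [charmatrix_apply_ne _ _ _ h, φ, Matrix.sub_apply, Matrix.smul_apply,
        Matrix.one_apply_ne h]
  rw [Matrix.charpoly, ← hmap, ← RingHom.map_det, ← Matrix.charpoly, hc]
  show (aeval (X + C 2 : ℚ[X])) (X ^ 7 * (X - C 2)) = _
  rw [_root_.map_mul, map_pow, map_sub, aeval_X, aeval_C, Polynomial.algebraMap_eq]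
  ring

open Module in
lemma eig_unique (B : Matrix (Fin 8) (Fin 8) ℚ)
    (hc : B.charpoly = X ^ 7 * (X - C 2))
    (hones : B *ᵥ (fun _ => (1:ℚ)) = (2:ℚ) • (fun _ => (1:ℚ)))
    (v : Fin 8 → ℚ) (hv : B *ᵥ v = (2:ℚ) • v)
    (hsum : ∑ i, v i = 0) : v = 0 := by
  set g : Module.End ℚ (Fin 8 → ℚ) := Matrix.toLin' (B - (2:ℚ) • 1) with hg
  have hchar : LinearMap.charpoly g = (X + C 2) ^ 7 * X := by
    rw [← LinearMap.charpoly_toMatrix g (Pi.basisFun ℚ (Fin 8)),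
        LinearMap.toMatrix_eq_toMatrix', hg, LinearMap.toMatrix'_toLin']
    exact charpoly_sub_two hc
  have hfr : finrank ℚ (g.maxGenEigenspace 0) ≤ 1 := by
    rw [LinearMap.finrank_maxGenEigenspace_zero_eq, hchar]
    have h1 : ((X + C 2 : ℚ[X]) ^ 7).natTrailingDegree = 0 := by
      apply Polynomial.natTrailingDegree_eq_zero_of_constantCoeff_ne_zero
      simp [map_pow]
    rw [Polynomial.natTrailingDegree_mul (pow_ne_zero _ (Polynomial.X_add_C_ne_zero 2)) X_ne_zero, h1,
      Polynomial.natTrailingDegree_X]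
  have hker : ∀ w : Fin 8 → ℚ, B *ᵥ w = (2:ℚ) • w → w ∈ g.maxGenEigenspace 0 := by
    intro w hw
    rw [Module.End.mem_maxGenEigenspace]
    refine ⟨1, ?_⟩
    simp only [zero_smul, sub_zero, pow_one, hg, Matrix.toLin'_apply, Matrix.sub_mulVec, hw,
      Matrix.smul_mulVec, Matrix.one_mulVec]
    abel
  obtain ⟨v₀, hv₀⟩ := finrank_le_one_iff.mp hfr
  obtain ⟨a, ha⟩ := hv₀ ⟨_, hker _ hones⟩
  obtain ⟨b, hb⟩ := hv₀ ⟨_, hker _ hv⟩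
  have ha0 : a ≠ 0 := by
    rintro rfl
    have := congrArg (fun (x : g.maxGenEigenspace 0) => (x : Fin 8 → ℚ) 0) ha
    simp at this
  have hvb : v = (b * a⁻¹) • (fun _ => (1:ℚ)) := by
    have h1 := congrArg (fun (x : g.maxGenEigenspace 0) => ((a⁻¹ * b) • x : g.maxGenEigenspace 0)) ha
    simp only [smul_smul] at h1
    rw [mul_comm a⁻¹ b, mul_assoc, inv_mul_cancel₀ ha0, mul_one] at h1
    have h2 := congrArg Subtype.val (hb.symm.trans h1)
    simpa using h2
  rw [hvb] at hsum ⊢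
  simp only [Finset.sum_const, Finset.card_univ, Fintype.card_fin, Pi.smul_apply,
    smul_eq_mul, mul_one, nsmul_eq_mul] at hsum
  have : b * a⁻¹ = 0 := by linarith
  rw [this, zero_smul]

lemma pow7_eq (B : Matrix (Fin 8) (Fin 8) ℚ)
    (hc : B.charpoly = X ^ 7 * (X - C 2))
    (hr : B *ᵥ (fun _ => (1:ℚ)) = (2:ℚ) • (fun _ => (1:ℚ)))
    (hl : (fun _ => (1:ℚ)) ᵥ* B = (2:ℚ) • (fun _ => (1:ℚ))) :
    B ^ 7 = Matrix.of (fun _ _ => (16:ℚ)) := by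
  set J : Matrix (Fin 8) (Fin 8) ℚ := Matrix.of (fun _ _ => (1:ℚ)) with hJ
  have hBJ : B * J = (2:ℚ) • J := by
    ext i j
    have := congrFun hr i
    simp only [Matrix.mulVec, dotProduct, Pi.smul_apply, smul_eq_mul, mul_one] at this
    simp [Matrix.mul_apply, hJ, this]
  have hJB : J * B = (2:ℚ) • J := by
    ext i j
    have := congrFun hl j
    simp only [Matrix.vecMul, dotProduct, Pi.smul_apply, smul_eq_mul, mul_one, one_mul] at this
    simp [Matrix.mul_apply, hJ, this]
  have hJJ : J * J = (8:ℚ) • J := by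
    ext i j
    simp [Matrix.mul_apply, hJ]
  have hCH : B ^ 8 = (2:ℚ) • B ^ 7 := by
    have h0 := Matrix.aeval_self_charpoly B
    rw [hc, _root_.map_mul, map_pow, aeval_X, map_sub, aeval_X, aeval_C] at h0
    rw [Matrix.mul_sub, sub_eq_zero] at h0
    rw [← pow_succ] at h0
    rw [h0]
    ext i j
    simp [Matrix.mul_apply, Matrix.algebraMap_matrix_apply, Matrix.smul_apply,
      Finset.sum_ite_eq, mul_comm]
  have hBkJ : ∀ k : ℕ, B ^ k * J = ((2:ℚ) ^ k) • J := by
    intro k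
    induction k with
    | zero => simp
    | succ n ih =>
      rw [pow_succ', mul_assoc, ih, Matrix.mul_smul, hBJ, smul_smul]
      congr 1
      ring
  have hJBk : ∀ k : ℕ, J * B ^ k = ((2:ℚ) ^ k) • J := by
    intro k
    induction k with
    | zero => simp
    | succ n ih =>
      rw [pow_succ, ← mul_assoc, ih, Matrix.smul_mul, hJB, smul_smul]
      congr 1
      ring
  have hpow : B ^ 14 = ((2:ℚ) ^ 7) • B ^ 7 := by
    have step : ∀ k : ℕ, B ^ (8 + k) = ((2:ℚ) ^ (k + 1)) • B ^ 7 := by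
      intro k
      induction k with
      | zero => simpa using hCH
      | succ n ih =>
        have : (8 : ℕ) + (n + 1) = (8 + n) + 1 := by omega
        rw [this, pow_succ, ih, Matrix.smul_mul, ← pow_succ, hCH, smul_smul]
        congr 1
        ring
    simpa using step 6
  set N : Matrix (Fin 8) (Fin 8) ℚ := B ^ 7 - (16:ℚ) • J with hN
  have hAN : B * N = (2:ℚ) • N := by
    rw [hN, Matrix.mul_sub, Matrix.mul_smul, hBJ, ← pow_succ', hCH, smul_smul, smul_sub,
      smul_smul]
    norm_num
  have hsum : ∀ j, ∑ i, N i j = 0 := by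
    intro j
    have h7 := congrFun (congrFun (hJBk 7) j) j
    simp only [Matrix.mul_apply, hJ, Matrix.of_apply, one_mul, Matrix.smul_apply,
      smul_eq_mul, mul_one] at h7
    have : ∀ i, N i j = (B ^ 7) i j - 16 := by
      intro i
      simp [hN, hJ]
    simp only [this, Finset.sum_sub_distrib, h7]
    norm_num
  have hcol : ∀ j, (fun i => N i j) = 0 := by
    intro j
    apply eig_unique B hc (by simpa using hr)
    · ext i
      have := congrFun (congrFun hAN i) j
      simp only [Matrix.mul_apply, Matrix.smul_apply, smul_eq_mul] at this
      simpa [Matrix.mulVec, dotProduct] using this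
    · exact hsum j
  have hN0 : N = 0 := by
    ext i j
    exact congrFun (hcol j) i
  have h16 : B ^ 7 = (16:ℚ) • J := sub_eq_zero.mp hN0
  rw [h16]
  ext i j
  simp [hJ]


theorem main_pow (A : Matrix (Fin 8) (Fin 8) ℕ)
    (hRight : A *ᵥ (fun _ => 1) = fun _ => 2)
    (hLeft : (fun _ => 1) ᵥ* A = fun _ => 2)
    (hChar : (A.map (Nat.cast : ℕ → ℤ)).charpoly =
      Polynomial.X ^ 7 * (Polynomial.X - Polynomial.C 2)) :
    A ^ 7 = Matrix.of (fun _ _ => 2 ^ 4) := by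
  set A' : Matrix (Fin 8) (Fin 8) ℚ := A.map (Nat.cast : ℕ → ℚ) with hA'
  have hc' : A'.charpoly = Polynomial.X ^ 7 * (Polynomial.X - Polynomial.C 2) := by
    have h1 : A' = (A.map (Nat.cast : ℕ → ℤ)).map ((Int.castRingHom ℚ) : ℤ → ℚ) := by
      ext i j; simp [hA']
    rw [h1, Matrix.charpoly_map _ (Int.castRingHom ℚ), hChar]
    simp only [Polynomial.map_mul, Polynomial.map_pow, Polynomial.map_sub,
      Polynomial.map_X, Polynomial.map_ofNat, Polynomial.map_C, map_ofNat]
  have hr' : A' *ᵥ (fun _ => (1:ℚ)) = (2:ℚ) • (fun _ => (1:ℚ)) := by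
    ext i
    have := congrFun hRight i
    simp only [Matrix.mulVec, dotProduct, mul_one] at this ⊢
    simp only [hA', Matrix.map_apply, Pi.smul_apply, smul_eq_mul, mul_one]
    exact_mod_cast this
  have hl' : (fun _ => (1:ℚ)) ᵥ* A' = (2:ℚ) • (fun _ => (1:ℚ)) := by
    ext j
    have := congrFun hLeft j
    simp only [Matrix.vecMul, dotProduct, one_mul] at this ⊢
    simp only [hA', Matrix.map_apply, Pi.smul_apply, smul_eq_mul, mul_one]
    exact_mod_cast this
  have h7 := pow7_eq A' hc' hr' hl'
  have hmp : (A ^ 7).map (Nat.cast : ℕ → ℚ) = A' ^ 7 := by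
    rw [hA']
    have := map_pow ((Nat.castRingHom ℚ).mapMatrix) A 7
    simpa only [RingHom.mapMatrix_apply, Nat.coe_castRingHom] using this
  ext i j
  have := congrFun (congrFun (hmp.trans h7) i) j
  simp only [Matrix.map_apply, Matrix.of_apply] at this ⊢
  exact_mod_cast this

end Aux

/-- **Statement 18.** If `A` is an `8 × 8` ℕ-matrix whose all-ones vector is a right and a
left eigenvector for the eigenvalue `2` and whose characteristic polynomial (over `ℤ`) is
`x⁷ (x - 2)`, then `A⁷ = 16 J = (2⁴ 𝟙)(𝟙ᵀ)` (where `J` is the all-ones matrix) and the pair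
`(2⁴ 𝟙, 𝟙ᵀ)` is a unital shift equivalence of lag `7` from `A` to `(2)`; in particular `A`
is unitally shift equivalent to `(2)`. -/
theorem ashley_unitallyShiftEquivalent_two (A : Matrix (Fin 8) (Fin 8) ℕ)
    (hRight : A *ᵥ (fun _ => 1) = fun _ => 2)
    (hLeft : (fun _ => 1) ᵥ* A = fun _ => 2)
    (hChar : (A.map (Nat.cast : ℕ → ℤ)).charpoly =
      Polynomial.X ^ 7 * (Polynomial.X - Polynomial.C 2)) :
    A ^ 7 = Matrix.of (fun _ _ => 2 ^ 4) ∧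
    A ^ 7 = Matrix.of (fun (_ : Fin 8) (_ : Fin 1) => 2 ^ 4) *
      Matrix.of (fun (_ : Fin 1) (_ : Fin 8) => 1) ∧
    IsUnitalShiftEquivalence A !![2]
      (Matrix.of (fun (_ : Fin 8) (_ : Fin 1) => 2 ^ 4))
      (Matrix.of (fun (_ : Fin 1) (_ : Fin 8) => 1)) 7 ∧
    UnitallyShiftEquivalent A !![2] := by
  have hA7 := main_pow A hRight hLeft hChar
  have h2 : A ^ 7 = Matrix.of (fun (_ : Fin 8) (_ : Fin 1) => 2 ^ 4) *
      Matrix.of (fun (_ : Fin 1) (_ : Fin 8) => 1) := by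
    rw [hA7]
    ext i j
    simp [Matrix.mul_apply, Fin.sum_univ_one]
  have hSR : (!![2] : Matrix (Fin 1) (Fin 1) ℕ) ^ 7 =
      Matrix.of (fun (_ : Fin 1) (_ : Fin 8) => 1) *
      Matrix.of (fun (_ : Fin 8) (_ : Fin 1) => 2 ^ 4) := by
    rw [one_by_one_pow]
    ext i j
    fin_cases i; fin_cases j
    simp [Matrix.mul_apply]
  have hAR : A * Matrix.of (fun (_ : Fin 8) (_ : Fin 1) => 2 ^ 4) =
      Matrix.of (fun (_ : Fin 8) (_ : Fin 1) => 2 ^ 4) * !![2] := by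
    ext i j
    fin_cases j
    have hri := congrFun hRight i
    simp only [Matrix.mulVec, dotProduct, mul_one] at hri
    simp [Matrix.mul_apply, Fin.sum_univ_one, ← Finset.sum_mul, hri]
  have hBS : (!![2] : Matrix (Fin 1) (Fin 1) ℕ) *
      Matrix.of (fun (_ : Fin 1) (_ : Fin 8) => 1) =
      Matrix.of (fun (_ : Fin 1) (_ : Fin 8) => 1) * A := by
    ext i j
    fin_cases i
    have hlj := congrFun hLeft j
    simp only [Matrix.vecMul, dotProduct, one_mul] at hlj
    simp [Matrix.mul_apply, Fin.sum_univ_one, hlj]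
  have ht : (!![2] : Matrix (Fin 1) (Fin 1) ℕ)ᵀ = !![2] := by
    ext i j; fin_cases i; fin_cases j; rfl
  have hU : IsUnitalShiftEquivalence A !![2]
      (Matrix.of (fun (_ : Fin 8) (_ : Fin 1) => 2 ^ 4))
      (Matrix.of (fun (_ : Fin 1) (_ : Fin 8) => 1)) 7 := by
    refine ⟨⟨by norm_num, h2, hSR, hAR, hBS⟩, 0, 7, ?_⟩
    funext x
    rw [ht]
    simp only [pow_zero, Matrix.one_mulVec, Nat.zero_add, one_by_one_pow]
    simp [Matrix.mulVec, dotProduct, Matrix.transpose_apply]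
  exact ⟨hA7, h2, hU, ⟨7, _, _, hU⟩⟩
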